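/- Let a < y and let F : [a,y] × ℝ → ℝ be continuous, strictly positive, and Lipschitz in its second variable uniformly in the first (there is L such that |F(t,w) − F(t,w')| ≤ L|w − w'| for all t ∈ [a,y] and w, w' ∈ ℝ). Then there exists a unique continuous function υ : [a,y] → ℝ satisfying υ(t) = ∫_t^y (1/2)(1 − υ(s)²) · F(s, υ(s)) ds for all t ∈ [a,y]; moreover υ(y) = 0, 0 < υ(t) < 1 for all t ∈ [a,y), and υ is strictly decreasing on [a,y]. -/

import Mathlib

open Set intervalIntegral MeasureTheory

/-- clamp to [-1,1] -/
noncomputable def Stmt11Aux.cl (w : ℝ) : ℝ := max (min 1 w) (-1)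

namespace Stmt11Aux

lemma cl_mem (w : ℝ) : cl w ∈ Icc (-1 : ℝ) 1 :=
  ⟨le_max_right _ _, max_le (min_le_left _ _) (by norm_num)⟩

lemma cl_eq {w : ℝ} (h1 : -1 ≤ w) (h2 : w ≤ 1) : cl w = w := by
  rw [cl, min_eq_right h2, max_eq_left h1]

lemma cl_lip (w w' : ℝ) : |cl w - cl w'| ≤ |w - w'| := by
  refine (abs_max_sub_max_le_abs _ _ _).trans ?_
  refine (abs_min_sub_min_le_max 1 w 1 w').trans ?_
  simp

/-- clamp to [a,y] -/
noncomputable def clT (a y t : ℝ) : ℝ := max (min y t) a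

lemma clT_mem {a y : ℝ} (hay : a ≤ y) (t : ℝ) : clT a y t ∈ Icc a y :=
  ⟨le_max_right _ _, max_le (min_le_left _ _) hay⟩

lemma clT_eq {a y t : ℝ} (h : t ∈ Icc a y) : clT a y t = t := by
  rw [clT, min_eq_right h.2, max_eq_left h.1]

lemma lip_key {G G' : ℝ} {C L' M u u' : ℝ} (hL' : 0 ≤ L')
    (hlip : |G - G'| ≤ L' * |u - u'|) (hb : |G'| ≤ C)
    (hu : |u| ≤ M) (hu' : |u'| ≤ M) :
    |1/2*(1-u^2)*G - 1/2*(1-u'^2)*G'| ≤ (((1+M^2)*L' + 2*M*C)/2) * |u - u'| := by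
  have hM : 0 ≤ M := (abs_nonneg u).trans hu
  have hC : 0 ≤ C := (abs_nonneg G').trans hb
  have h1 : 1/2*(1-u^2)*G - 1/2*(1-u'^2)*G'
      = 1/2*((1-u^2)*(G - G') + ((u'-u)*(u'+u))*G') := by ring
  rw [h1, abs_mul, abs_of_pos (by norm_num : (0:ℝ) < 1/2)]
  have h2 : |(1-u^2)*(G - G') + ((u'-u)*(u'+u))*G'|
      ≤ |1-u^2| * |G - G'| + (|u'-u| * |u'+u|) * |G'| := by
    refine (abs_add_le _ _).trans ?_
    rw [abs_mul, abs_mul, abs_mul]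
  have h3 : |1 - u^2| ≤ 1 + M^2 := by
    have h0 : |u^2| ≤ M^2 := by
      rw [abs_of_nonneg (sq_nonneg u), ← sq_abs u]
      exact pow_le_pow_left₀ (abs_nonneg u) hu 2
    calc |1 - u^2| ≤ |1| + |u^2| := abs_sub _ _
      _ ≤ 1 + M^2 := by rw [abs_one]; linarith
  have h4 : |u' + u| ≤ 2*M := by
    calc |u' + u| ≤ |u'| + |u| := abs_add_le _ _
      _ ≤ 2*M := by linarith
  have h5 : |u' - u| = |u - u'| := abs_sub_comm _ _
  rw [h5] at h2
  have habs : (0:ℝ) ≤ |u - u'| := abs_nonneg _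
  have key : |(1-u^2)*(G - G') + ((u'-u)*(u'+u))*G'|
      ≤ ((1+M^2)*L' + 2*M*C) * |u - u'| := by
    refine h2.trans ?_
    nlinarith [abs_nonneg (1 - u^2), abs_nonneg (G - G'), abs_nonneg (u'+u), abs_nonneg G',
      mul_le_mul h3 hlip (abs_nonneg _) (by nlinarith : (0:ℝ) ≤ 1 + M^2),
      mul_le_mul (mul_le_mul (le_refl (|u-u'|)) h4 (abs_nonneg _) habs) hb (abs_nonneg _)
        (by positivity)]
  linarith

lemma mem_nhdsWithin_Iic {a y t : ℝ} (ha : a < t) (ht : t ≤ y) : Icc a y ∈ nhdsWithin t (Iic t) :=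
  Filter.mem_of_superset (inter_mem_nhdsWithin (Iic t) (Ioi_mem_nhds ha))
    (fun x hx => ⟨hx.2.le, hx.1.trans ht⟩)

lemma mem_nhdsWithin_Ici {a y t : ℝ} (ha : a ≤ t) (ht : t < y) : Icc a y ∈ nhdsWithin t (Ici t) :=
  Filter.mem_of_superset (inter_mem_nhdsWithin (Ici t) (Iio_mem_nhds ht))
    (fun x hx => ⟨ha.trans hx.1, hx.2.le⟩)

lemma hasDeriv_integral {a y : ℝ} (hay : a < y) {G υ : ℝ → ℝ}
    (hG : ContinuousOn G (Icc a y))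
    (heq : ∀ t ∈ Icc a y, υ t = ∫ s in t..y, G s) :
    ∀ t ∈ Ioc a y, HasDerivWithinAt υ (-(G t)) (Iic t) t := by
  intro t ht
  have htI : t ∈ Icc a y := ⟨ht.1.le, ht.2⟩
  have hmem : Icc a y ∈ nhdsWithin t (Iic t) := mem_nhdsWithin_Iic ht.1 ht.2
  have hint : IntervalIntegrable G volume t y := by
    apply (hG.mono _).intervalIntegrable
    rw [uIcc_of_le ht.2]
    exact Icc_subset_Icc ht.1.le le_rfl
  have hmeas : StronglyMeasurableAtFilter G (nhdsWithin t (Iic t)) volume :=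
    ⟨Icc a y, hmem, hG.aestronglyMeasurable measurableSet_Icc⟩
  have hcw : ContinuousWithinAt G (Iic t) t := (hG t htI).mono_of_mem_nhdsWithin hmem
  have h1 : HasDerivWithinAt (fun u => ∫ x in u..y, G x) (-(G t)) (Iic t) t :=
    intervalIntegral.integral_hasDerivWithinAt_left hint hmeas hcw
  refine h1.congr_of_eventuallyEq ?_ (heq t htI)
  exact Filter.eventuallyEq_of_mem hmem (fun x hx => heq x hx)

end Stmt11Aux

open Stmt11Aux

theorem stmt11 (a y : ℝ) (hay : a < y) (F : ℝ → ℝ → ℝ) (L : ℝ)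
    (hFc : ContinuousOn (fun p : ℝ × ℝ => F p.1 p.2) (Set.Icc a y ×ˢ Set.univ))
    (hFpos : ∀ t ∈ Set.Icc a y, ∀ w : ℝ, 0 < F t w)
    (hLip : ∀ t ∈ Set.Icc a y, ∀ w w' : ℝ, |F t w - F t w'| ≤ L * |w - w'|) :
    (∃ υ : ℝ → ℝ, ContinuousOn υ (Set.Icc a y) ∧
      (∀ t ∈ Set.Icc a y, υ t = ∫ s in t..y, (1 / 2) * (1 - υ s ^ 2) * F s (υ s)) ∧
      υ y = 0 ∧ (∀ t ∈ Set.Ico a y, υ t ∈ Set.Ioo (0 : ℝ) 1) ∧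
      StrictAntiOn υ (Set.Icc a y)) ∧
    ∀ υ₁ υ₂ : ℝ → ℝ,
      ContinuousOn υ₁ (Set.Icc a y) →
      (∀ t ∈ Set.Icc a y, υ₁ t = ∫ s in t..y, (1 / 2) * (1 - υ₁ s ^ 2) * F s (υ₁ s)) →
      ContinuousOn υ₂ (Set.Icc a y) →
      (∀ t ∈ Set.Icc a y, υ₂ t = ∫ s in t..y, (1 / 2) * (1 - υ₂ s ^ 2) * F s (υ₂ s)) →
      Set.EqOn υ₁ υ₂ (Set.Icc a y) := by
  have hyI : y ∈ Icc a y := right_mem_Icc.mpr hay.le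
  -- Lipschitz constant, nonneg
  set L' : ℝ := max L 0 with hL'def
  have hL'0 : 0 ≤ L' := le_max_right _ _
  have hlipF : ∀ t ∈ Icc a y, ∀ w w' : ℝ, |F t w - F t w'| ≤ L' * |w - w'| := by
    intro t ht w w'
    exact (hLip t ht w w').trans (mul_le_mul_of_nonneg_right (le_max_left _ _) (abs_nonneg _))
  -- bound on F on Icc × [-1,1]
  obtain ⟨C0, hC0⟩ := (isCompact_Icc.prod isCompact_Icc).exists_bound_of_continuousOn
    (hFc.mono (prod_mono_right (subset_univ _)))
  set C : ℝ := max C0 0 with hCdef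
  have hC0' : 0 ≤ C := le_max_right _ _
  have hCF : ∀ t ∈ Icc a y, ∀ u ∈ Icc (-1:ℝ) 1, |F t u| ≤ C := by
    intro t ht u hu
    have := hC0 (t, u) ⟨ht, hu⟩
    rw [Real.norm_eq_abs] at this
    exact this.trans (le_max_left _ _)
  -- truncated vector field
  set v : ℝ → ℝ → ℝ := fun t w => -(1/2 * (1 - cl w ^ 2) * F (clT a y t) (cl w)) with hvdef
  have hKnn : (0:ℝ) ≤ ((1+(1:ℝ)^2)*L' + 2*1*C)/2 := by positivity
  set Kex : NNReal := Real.toNNReal (((1+(1:ℝ)^2)*L' + 2*1*C)/2) with hKdef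
  have lipv : ∀ t, LipschitzWith Kex (v t) := by
    intro t
    apply LipschitzWith.of_dist_le_mul
    intro w w'
    rw [Real.dist_eq, Real.dist_eq, hKdef, Real.coe_toNNReal _ hKnn]
    have hτ := clT_mem hay.le t
    have heq : v t w - v t w' =
        -(1/2*(1-cl w^2)*F (clT a y t) (cl w) - 1/2*(1-cl w'^2)*F (clT a y t) (cl w')) := by
      simp only [hvdef]; ring
    rw [heq, abs_neg]
    have step := lip_key (C := C) (M := 1) hL'0
      (hlipF _ hτ (cl w) (cl w'))
      (hCF _ hτ (cl w') (cl_mem w'))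
      (abs_le.mpr (cl_mem w)) (abs_le.mpr (cl_mem w'))
    refine step.trans (mul_le_mul_of_nonneg_left (cl_lip w w') hKnn)
  have hcl_sq : ∀ w : ℝ, 0 ≤ 1 - cl w ^ 2 ∧ 1 - cl w ^ 2 ≤ 1 := by
    intro w
    have h := cl_mem w
    constructor <;> nlinarith [h.1, h.2]
  have v_nonpos : ∀ t w, v t w ≤ 0 := by
    intro t w
    have hF := hFpos _ (clT_mem hay.le t) (cl w)
    have h1 := (hcl_sq w).1
    simp only [hvdef]
    have : 0 ≤ 1/2 * (1 - cl w ^ 2) * F (clT a y t) (cl w) := by positivity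
    linarith
  -- Picard-Lindelöf existence
  have ipl : IsPicardLindelof v (⟨y, hyI⟩ : Icc a y) (0:ℝ) (Real.toNNReal (C/2 * (y - a))) 0
      (Real.toNNReal (C/2)) Kex := by
    refine ⟨fun t _ => (lipv t).lipschitzOnWith,
      fun x _ => ?_, fun t ht x _ => ?_, ?_⟩
    · have hc : ContinuousOn (fun t => F t (cl x)) (Icc a y) := by
        apply hFc.comp (continuousOn_id.prodMk continuousOn_const)
        exact fun s hs => ⟨hs, mem_univ _⟩
      have hc2 : ContinuousOn (fun s => -(1/2 * (1 - cl x ^ 2) * F s (cl x))) (Icc a y) :=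
        (continuousOn_const.mul hc).neg
      refine hc2.congr ?_
      intro s hs
      simp only [hvdef, clT_eq hs]
    · rw [Real.norm_eq_abs, Real.coe_toNNReal _ (by linarith)]
      have hτ := clT_mem hay.le t
      have hb := hCF _ hτ (cl x) (cl_mem x)
      have h1 := hcl_sq x
      have habs : (0:ℝ) ≤ |F (clT a y t) (cl x)| := abs_nonneg _
      simp only [hvdef, abs_neg, abs_mul]
      rw [abs_of_nonneg h1.1, abs_of_pos (by norm_num : (0:ℝ) < 1/2)]
      nlinarith
    · have h1 : (0:ℝ) ≤ C/2 := by linarith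
      have h2 : (0:ℝ) ≤ C/2*(y-a) := mul_nonneg h1 (by linarith)
      simp only [sub_self, max_eq_right (by linarith : (0:ℝ) ≤ y - a), NNReal.coe_zero, sub_zero,
        tsub_zero, Real.coe_toNNReal _ h1, Real.coe_toNNReal _ h2, le_refl]
  obtain ⟨f, hf0, hder⟩ := ipl.exists_eq_forall_mem_Icc_hasDerivWithinAt₀
  replace hf0 : f y = 0 := hf0
  have fcont : ContinuousOn f (Icc a y) := fun t ht => (hder t ht).continuousWithinAt
  have hderAt : ∀ t ∈ Ioo a y, HasDerivAt f (v t (f t)) t :=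
    fun t ht => (hder t (Ioo_subset_Icc_self ht)).hasDerivAt (Icc_mem_nhds ht.1 ht.2)
  have hderIci : ∀ t ∈ Ico a y, HasDerivWithinAt f (v t (f t)) (Ici t) t :=
    fun t ht => (hder t ⟨ht.1, ht.2.le⟩).mono_of_mem_nhdsWithin (mem_nhdsWithin_Ici ht.1 ht.2)
  -- antitone
  have hAnti : AntitoneOn f (Icc a y) := by
    apply antitoneOn_of_deriv_nonpos (convex_Icc a y) fcont
    · intro x hx
      rw [interior_Icc] at hx
      exact (hderAt x hx).differentiableAt.differentiableWithinAt
    · intro x hx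
      rw [interior_Icc] at hx
      rw [(hderAt x hx).deriv]
      exact v_nonpos x (f x)
  have f_nonneg : ∀ t ∈ Icc a y, 0 ≤ f t := by
    intro t ht
    have := hAnti ht hyI ht.2
    rwa [hf0] at this
  have v_one : ∀ t, v t 1 = 0 := by
    intro t
    have h1 : cl 1 = 1 := cl_eq (by norm_num) le_rfl
    simp [hvdef, h1]
  -- f < 1 on Ico
  have f_lt_one : ∀ t ∈ Ico a y, f t < 1 := by
    intro t ht
    by_contra hcon
    push_neg at hcon
    have hsub : Icc t y ⊆ Icc a y := Icc_subset_Icc ht.1 le_rfl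
    have h1mem : (1:ℝ) ∈ Icc (f y) (f t) := by rw [hf0]; exact ⟨zero_le_one, hcon⟩
    obtain ⟨t₂, ht₂, hft₂⟩ := intermediate_value_Icc' ht.2.le (fcont.mono hsub) h1mem
    have hat₂ : a ≤ t₂ := ht.1.trans ht₂.1
    have heqn : EqOn f (fun _ => (1:ℝ)) (Icc t₂ y) := by
      apply ODE_solution_unique_of_mem_Icc_right (v := v) (s := fun _ => (univ : Set ℝ)) (K := Kex)
        (fun t _ => (lipv t).lipschitzOnWith)
        (fcont.mono (Icc_subset_Icc hat₂ le_rfl))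
        (fun s hs => hderIci s ⟨hat₂.trans hs.1, hs.2⟩)
        (fun s _ => mem_univ _)
        continuousOn_const
        ?_ (fun s _ => mem_univ _) hft₂
      intro s _
      have : v s ((fun _ => (1:ℝ)) s) = 0 := v_one s
      rw [this]
      exact hasDerivWithinAt_const _ _ _
    have := heqn (right_mem_Icc.mpr ht₂.2)
    rw [hf0] at this
    norm_num at this
  have f_le_one : ∀ t ∈ Icc a y, f t ≤ 1 := by
    intro t ht
    rcases eq_or_lt_of_le ht.2 with h | h
    · rw [h, hf0]; norm_num
    · exact (f_lt_one t ⟨ht.1, h⟩).le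
  -- f > 0 on Ico
  have f_pos : ∀ t ∈ Ico a y, 0 < f t := by
    intro t ht
    rcases (f_nonneg t ⟨ht.1, ht.2.le⟩).lt_or_eq with h | h
    · exact h
    · exfalso
      have hconst : ∀ x ∈ Icc t y, f x = 0 := by
        intro x hx
        refine le_antisymm ?_ (f_nonneg x ⟨ht.1.trans hx.1, hx.2⟩)
        have := hAnti ⟨ht.1, ht.2.le⟩ ⟨ht.1.trans hx.1, hx.2⟩ hx.1
        rwa [← h] at this
      set s := (t + y)/2 with hsdef
      have hs1 : t < s := by rw [hsdef]; linarith [ht.2]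
      have hs2 : s < y := by rw [hsdef]; linarith [ht.2]
      have hsIcc : s ∈ Icc a y := ⟨ht.1.trans hs1.le, hs2.le⟩
      have hev : f =ᶠ[nhds s] fun _ => (0:ℝ) :=
        Filter.eventually_of_mem (Ioo_mem_nhds hs1 hs2)
          (fun x hx => hconst x (Ioo_subset_Icc_self hx))
      have hd0 : HasDerivAt f 0 s := (hasDerivAt_const s (0:ℝ)).congr_of_eventuallyEq hev
      have hd1 : HasDerivAt f (v s (f s)) s := hderAt s ⟨lt_of_le_of_lt ht.1 hs1, hs2⟩
      have huniq : v s (f s) = 0 := hd1.unique hd0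
      have hfs0 : f s = 0 := hconst s ⟨hs1.le, hs2.le⟩
      have hcl0 : cl 0 = 0 := cl_eq (by norm_num) (by norm_num)
      rw [hfs0] at huniq
      simp only [hvdef, hcl0, clT_eq hsIcc] at huniq
      have := hFpos s hsIcc 0
      nlinarith
  -- strict antitone
  have hstrict : StrictAntiOn f (Icc a y) := by
    apply strictAntiOn_of_deriv_neg (convex_Icc a y) fcont
    intro x hx
    rw [interior_Icc] at hx
    rw [(hderAt x hx).deriv]
    have h1 := f_pos x ⟨hx.1.le, hx.2⟩
    have h2 := f_lt_one x ⟨hx.1.le, hx.2⟩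
    have hcleq : cl (f x) = f x := cl_eq (by linarith) h2.le
    have hF := hFpos x ⟨hx.1.le, hx.2.le⟩ (f x)
    simp only [hvdef, hcleq, clT_eq (⟨hx.1.le, hx.2.le⟩ : x ∈ Icc a y)]
    nlinarith [mul_pos (by nlinarith : (0:ℝ) < 1 - f x ^ 2) hF]
  -- v equals untruncated field along f
  have hveq : ∀ s ∈ Icc a y, v s (f s) = -(1/2 * (1 - f s ^ 2) * F s (f s)) := by
    intro s hs
    have h0 := f_nonneg s hs
    have h1 := f_le_one s hs
    simp only [hvdef, cl_eq (by linarith : (-1:ℝ) ≤ f s) h1, clT_eq hs]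
  -- continuity of integrand
  have contG : ContinuousOn (fun s => 1/2 * (1 - f s ^ 2) * F s (f s)) (Icc a y) := by
    refine (continuousOn_const.mul (continuousOn_const.sub (fcont.pow 2))).mul ?_
    exact hFc.comp (continuousOn_id.prodMk fcont) (fun s hs => ⟨hs, mem_univ _⟩)
  -- integral equation
  have hinteq : ∀ t ∈ Icc a y, f t = ∫ s in t..y, (1/2) * (1 - f s ^ 2) * F s (f s) := by
    intro t ht
    have hIcc_sub : Icc t y ⊆ Icc a y := Icc_subset_Icc ht.1 le_rfl
    have hcont' : ContinuousOn (fun s => v s (f s)) (Icc t y) := by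
      exact ((contG.mono hIcc_sub).neg).congr (fun s hs => hveq s (hIcc_sub hs))
    have hint : IntervalIntegrable (fun s => v s (f s)) volume t y :=
      ContinuousOn.intervalIntegrable (by rw [uIcc_of_le ht.2]; exact hcont')
    have hftc : (∫ s in t..y, v s (f s)) = f y - f t := by
      apply intervalIntegral.integral_eq_sub_of_hasDeriv_right_of_le ht.2
        (fcont.mono hIcc_sub) ?_ hint
      intro x hx
      have hxI : x ∈ Ioo a y := ⟨lt_of_le_of_lt ht.1 hx.1, hx.2⟩
      exact (hderAt x hxI).hasDerivWithinAt
    have hcongr : (∫ s in t..y, (1/2) * (1 - f s ^ 2) * F s (f s))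
        = ∫ s in t..y, -(v s (f s)) := by
      apply intervalIntegral.integral_congr
      intro s hs
      rw [uIcc_of_le ht.2] at hs
      show (1:ℝ)/2 * (1 - f s ^ 2) * F s (f s) = -(v s (f s))
      rw [hveq s (hIcc_sub hs), neg_neg]
    rw [hcongr, intervalIntegral.integral_neg, hftc, hf0]
    ring
  constructor
  · exact ⟨f, fcont, hinteq, hf0,
      fun t ht => ⟨f_pos t ht, f_lt_one t ht⟩, hstrict⟩
  -- Uniqueness
  intro υ₁ υ₂ hc1 he1 hc2 he2
  have contG1 : ContinuousOn (fun s => 1/2 * (1 - υ₁ s ^ 2) * F s (υ₁ s)) (Icc a y) := by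
    refine (continuousOn_const.mul (continuousOn_const.sub (hc1.pow 2))).mul ?_
    exact hFc.comp (continuousOn_id.prodMk hc1) (fun s hs => ⟨hs, mem_univ _⟩)
  have contG2 : ContinuousOn (fun s => 1/2 * (1 - υ₂ s ^ 2) * F s (υ₂ s)) (Icc a y) := by
    refine (continuousOn_const.mul (continuousOn_const.sub (hc2.pow 2))).mul ?_
    exact hFc.comp (continuousOn_id.prodMk hc2) (fun s hs => ⟨hs, mem_univ _⟩)
  have hd1 := hasDeriv_integral hay contG1 he1
  have hd2 := hasDeriv_integral hay contG2 he2
  have hy1 : υ₁ y = 0 := by rw [he1 y hyI, intervalIntegral.integral_same]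
  have hy2 : υ₂ y = 0 := by rw [he2 y hyI, intervalIntegral.integral_same]
  obtain ⟨M1, hM1⟩ := isCompact_Icc.exists_bound_of_continuousOn hc1
  obtain ⟨M2, hM2⟩ := isCompact_Icc.exists_bound_of_continuousOn hc2
  set M : ℝ := max 1 (max M1 M2) with hMdef
  have hM0 : (0:ℝ) ≤ M := le_trans zero_le_one (le_max_left _ _)
  have hb1 : ∀ t ∈ Icc a y, υ₁ t ∈ Icc (-M) M := by
    intro t ht
    have := (hM1 t ht).trans ((le_max_left M1 M2).trans (le_max_right 1 _))
    rw [Real.norm_eq_abs] at this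
    exact ⟨neg_le_of_abs_le this, le_of_abs_le this⟩
  have hb2 : ∀ t ∈ Icc a y, υ₂ t ∈ Icc (-M) M := by
    intro t ht
    have := (hM2 t ht).trans ((le_max_right M1 M2).trans (le_max_right 1 _))
    rw [Real.norm_eq_abs] at this
    exact ⟨neg_le_of_abs_le this, le_of_abs_le this⟩
  obtain ⟨CM0, hCM0⟩ := (isCompact_Icc.prod isCompact_Icc).exists_bound_of_continuousOn
    (hFc.mono (prod_mono_right (subset_univ _)))
  set CM : ℝ := max CM0 0 with hCMdef
  have hCM' : 0 ≤ CM := le_max_right _ _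
  have hCMF : ∀ t ∈ Icc a y, ∀ u ∈ Icc (-M) M, |F t u| ≤ CM := by
    intro t ht u hu
    have := hCM0 (t, u) ⟨ht, hu⟩
    rw [Real.norm_eq_abs] at this
    exact this.trans (le_max_left _ _)
  set vM : ℝ → ℝ → ℝ := fun t w => -(1/2 * (1 - w^2) * F (clT a y t) w) with hvMdef
  have hKMnn : (0:ℝ) ≤ ((1+M^2)*L' + 2*M*CM)/2 := by positivity
  set KM : NNReal := Real.toNNReal (((1+M^2)*L' + 2*M*CM)/2) with hKMdef
  have lipM : ∀ t : ℝ, LipschitzOnWith KM (vM t) (Icc (-M) M) := by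
    intro t
    apply LipschitzOnWith.of_dist_le_mul
    intro w hw w' hw'
    rw [Real.dist_eq, Real.dist_eq, hKMdef, Real.coe_toNNReal _ hKMnn]
    have hτ := clT_mem hay.le t
    have heqd : vM t w - vM t w' =
        -(1/2*(1-w^2)*F (clT a y t) w - 1/2*(1-w'^2)*F (clT a y t) w') := by
      simp only [hvMdef]; ring
    rw [heqd, abs_neg]
    exact lip_key hL'0 (hlipF _ hτ w w') (hCMF _ hτ w' hw')
      (abs_le.mpr hw) (abs_le.mpr hw')
  have hd1' : ∀ t ∈ Ioc a y, HasDerivWithinAt υ₁ (vM t (υ₁ t)) (Iic t) t := by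
    intro t ht
    have : vM t (υ₁ t) = -(1/2 * (1 - υ₁ t ^ 2) * F t (υ₁ t)) := by
      simp only [hvMdef, clT_eq (⟨ht.1.le, ht.2⟩ : t ∈ Icc a y)]
    rw [this]
    exact hd1 t ht
  have hd2' : ∀ t ∈ Ioc a y, HasDerivWithinAt υ₂ (vM t (υ₂ t)) (Iic t) t := by
    intro t ht
    have : vM t (υ₂ t) = -(1/2 * (1 - υ₂ t ^ 2) * F t (υ₂ t)) := by
      simp only [hvMdef, clT_eq (⟨ht.1.le, ht.2⟩ : t ∈ Icc a y)]
    rw [this]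
    exact hd2 t ht
  exact ODE_solution_unique_of_mem_Icc_left (v := vM) (s := fun _ => Icc (-M) M)
    (fun t _ => lipM t) hc1 hd1' (fun t ht => hb1 t ⟨ht.1.le, ht.2⟩)
    hc2 hd2' (fun t ht => hb2 t ⟨ht.1.le, ht.2⟩) (by rw [hy1, hy2])
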